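/- Let A be an n×n real symmetric positive definite matrix and let q, g ∈ ℝⁿ be nonzero. Define α̂ = ⟨q,Aq⟩/⟨q,A²q⟩, α^{MG} = ⟨g,Ag⟩/⟨g,A²g⟩, Γ = 4⟨q,A²g⟩²/(⟨q,Aq⟩·⟨g,Ag⟩), and α̃^{BB2} = 2/( 1/α̂ + 1/α^{MG} + √( (1/α̂ − 1/α^{MG})² + Γ ) ). Then α̃^{BB2} ≤ min{ α^{MG}, α̂ }. -/

import Mathlib

open Matrix

lemma aux_dot_pos {n : ℕ} {A : Matrix (Fin n) (Fin n) ℝ}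
    (hA : A.PosDef) {x : Fin n → ℝ} (hx : x ≠ 0) : 0 < x ⬝ᵥ (A *ᵥ x) := by
  have := hA.dotProduct_mulVec_pos hx
  simpa using this

/-- Second inequality of (upbdtalp3): the stepsize `α̃^{BB2}` of (newsbb2) is
bounded above by `min { α^{MG}, α̂ }`. -/
theorem newsbb2_upper_bound {n : ℕ} {A : Matrix (Fin n) (Fin n) ℝ}
    (hA : A.PosDef) (q g : Fin n → ℝ) (hq : q ≠ 0) (hg : g ≠ 0)
    (αhat αMG Γ : ℝ)
    (hαhat : αhat = (q ⬝ᵥ (A *ᵥ q)) / (q ⬝ᵥ (A *ᵥ (A *ᵥ q))))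
    (hαMG : αMG = (g ⬝ᵥ (A *ᵥ g)) / (g ⬝ᵥ (A *ᵥ (A *ᵥ g))))
    (hΓ : Γ = 4 * (q ⬝ᵥ (A *ᵥ (A *ᵥ g))) ^ 2 /
      ((q ⬝ᵥ (A *ᵥ q)) * (g ⬝ᵥ (A *ᵥ g)))) :
    2 / (1 / αhat + 1 / αMG + Real.sqrt ((1 / αhat - 1 / αMG) ^ 2 + Γ)) ≤
      min αMG αhat := by
  have hsym : Aᵀ = A := by
    have := hA.1
    simpa [Matrix.IsHermitian] using this
  have hq1 : 0 < q ⬝ᵥ (A *ᵥ q) := aux_dot_pos hA hq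
  have hg1 : 0 < g ⬝ᵥ (A *ᵥ g) := aux_dot_pos hA hg
  have hAq : A *ᵥ q ≠ 0 := by
    intro h
    rw [h] at hq1
    simp at hq1
  have hAg : A *ᵥ g ≠ 0 := by
    intro h
    rw [h] at hg1
    simp at hg1
  have hq2 : 0 < q ⬝ᵥ (A *ᵥ (A *ᵥ q)) := by
    have : q ⬝ᵥ (A *ᵥ (A *ᵥ q)) = (A *ᵥ q) ⬝ᵥ (A *ᵥ q) := by
      rw [Matrix.dotProduct_mulVec, ← Matrix.mulVec_transpose, hsym]
    rw [this]
    have hnn : 0 ≤ (A *ᵥ q) ⬝ᵥ (A *ᵥ q) := by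
      simpa using dotProduct_self_star_nonneg (A *ᵥ q)
    exact lt_of_le_of_ne hnn (Ne.symm (dotProduct_self_eq_zero.not.mpr hAq))
  have hg2 : 0 < g ⬝ᵥ (A *ᵥ (A *ᵥ g)) := by
    have : g ⬝ᵥ (A *ᵥ (A *ᵥ g)) = (A *ᵥ g) ⬝ᵥ (A *ᵥ g) := by
      rw [Matrix.dotProduct_mulVec, ← Matrix.mulVec_transpose, hsym]
    rw [this]
    have hnn : 0 ≤ (A *ᵥ g) ⬝ᵥ (A *ᵥ g) := by
      simpa using dotProduct_self_star_nonneg (A *ᵥ g)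
    exact lt_of_le_of_ne hnn (Ne.symm (dotProduct_self_eq_zero.not.mpr hAg))
  have hahat : 0 < αhat := by rw [hαhat]; positivity
  have haMG : 0 < αMG := by rw [hαMG]; positivity
  have hΓ0 : 0 ≤ Γ := by rw [hΓ]; positivity
  set a := 1 / αhat with ha
  set b := 1 / αMG with hb
  have hap : 0 < a := by positivity
  have hbp : 0 < b := by positivity
  have hsq : |a - b| ≤ Real.sqrt ((a - b) ^ 2 + Γ) := by
    rw [← Real.sqrt_sq_eq_abs]
    exact Real.sqrt_le_sqrt (by linarith)
  have hsqnn : (0:ℝ) ≤ Real.sqrt ((a - b) ^ 2 + Γ) := Real.sqrt_nonneg _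
  have habs : a - b ≤ |a - b| ∧ b - a ≤ |a - b| := ⟨le_abs_self _, by
    rw [abs_sub_comm]; exact le_abs_self _⟩
  have hD : 0 < a + b + Real.sqrt ((a - b) ^ 2 + Γ) := by linarith
  have h1 : 2 / (a + b + Real.sqrt ((a - b) ^ 2 + Γ)) ≤ αMG := by
    rw [div_le_iff₀ hD]
    have hb2 : b * αMG = 1 := by rw [hb]; field_simp
    have : 2 * b ≤ a + b + Real.sqrt ((a - b) ^ 2 + Γ) := by linarith [habs.2, hsq]
    nlinarith
  have h2 : 2 / (a + b + Real.sqrt ((a - b) ^ 2 + Γ)) ≤ αhat := by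
    rw [div_le_iff₀ hD]
    have ha2 : a * αhat = 1 := by rw [ha]; field_simp
    have : 2 * a ≤ a + b + Real.sqrt ((a - b) ^ 2 + Γ) := by linarith [habs.1, hsq]
    nlinarith
  exact le_min h1 h2
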